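/- arXiv:1901.04981 — 3 statements merged into one kernel-verified Lean document; each statement's English description precedes it below -/
import Mathlib

section
/- For all natural numbers n and m with m ≥ 1, the generalized Catalan number C_{m,n} = (m+n choose n)^{-1} · ((m+1)n)! / (n!)^{m+1} is an integer. -/
open Finset Nat

/-- Pointwise floor inequality used in the Legendre-sum comparison. -/
lemma gen_catalan_key (m n q : ℕ) (hq : 0 < q) :
    (m + n) / q + m * (n / q) ≤ (m + 1) * n / q + m / q := by
  have hr : n % q < q := Nat.mod_lt _ hq
  have hs : m % q < q := Nat.mod_lt _ hq
  have h1 : (m + n) / q = m / q + n / q + (m % q + n % q) / q := by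
    conv_lhs => rw [← Nat.div_add_mod m q, ← Nat.div_add_mod n q]
    rw [show q * (m / q) + m % q + (q * (n / q) + n % q)
        = q * (m / q + n / q) + (m % q + n % q) by ring,
      Nat.mul_add_div hq]
  have h2 : (m + 1) * n / q = (m + 1) * (n / q) + (m + 1) * (n % q) / q := by
    conv_lhs => rw [← Nat.div_add_mod n q]
    rw [show (m + 1) * (q * (n / q) + n % q)
        = q * ((m + 1) * (n / q)) + (m + 1) * (n % q) by ring,
      Nat.mul_add_div hq]
  have h3 : (m % q + n % q) / q ≤ (m + 1) * (n % q) / q := by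
    rcases Nat.eq_zero_or_pos (n % q) with h | h
    · rw [h, Nat.add_zero, Nat.div_eq_of_lt hs]
      exact Nat.zero_le _
    · apply Nat.div_le_div_right
      have hsm : m % q ≤ m := Nat.mod_le m q
      have : m ≤ m * (n % q) := Nat.le_mul_of_pos_right m h
      nlinarith
  have h4 : (m + 1) * (n / q) = n / q + m * (n / q) := by ring
  omega

/-- Legendre's formula phrased with `Nat.factorization`. -/
lemma gen_catalan_legendre {p : ℕ} (hp : p.Prime) {n b : ℕ} (hb : Nat.log p n < b) :
    (n !).factorization p = ∑ i ∈ Finset.Ico 1 b, n / p ^ i := by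
  rw [← Nat.multiplicity_eq_factorization hp (Nat.factorial_pos n).ne']
  exact multiplicity_eq_of_emultiplicity_eq_some (hp.emultiplicity_factorial hb)

/-- The generalized Catalan number `C_{m,n} = multinomial((m+1)n; n,…,n) / binom(m+n, n)`
(with `m+1` blocks of size `n`) is an integer, i.e. `binom(m+n,n)` divides the multinomial
coefficient. -/
theorem generalized_catalan_integer (m n : ℕ) (hm : 1 ≤ m) :
    ((m + n).choose n) ∣ Nat.multinomial (Finset.range (m + 1)) (fun _ => n) := by
  set A := (m + n).choose n with hA
  set B := Nat.multinomial (Finset.range (m + 1)) (fun _ => n) with hB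
  have hA0 : A ≠ 0 := (Nat.choose_pos (Nat.le_add_left n m)).ne'
  have hB0 : B ≠ 0 := (Nat.multinomial_pos _ _).ne'
  -- defining equations
  have heqA : A * (m ! * n !) = (m + n)! := by
    rw [hA, ← Nat.add_choose_mul_factorial_mul_factorial m n, mul_assoc]
  have heqB : B * (n !) ^ (m + 1) = ((m + 1) * n)! := by
    have := Nat.multinomial_spec (Finset.range (m + 1)) (fun _ => n)
    simpa [Finset.prod_const, Finset.sum_const, Finset.card_range, mul_comm] using this
  rw [← Nat.factorization_le_iff_dvd hA0 hB0]
  intro p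
  by_cases hp : p.Prime
  · -- factorization equations
    have hfA : A.factorization p + ((m !).factorization p + (n !).factorization p)
        = ((m + n)!).factorization p := by
      rw [← heqA, Nat.factorization_mul hA0 (by positivity),
        Nat.factorization_mul (Nat.factorial_ne_zero m) (Nat.factorial_ne_zero n)]
      simp
    have hfB : B.factorization p + (m + 1) * (n !).factorization p
        = (((m + 1) * n)!).factorization p := by
      rw [← heqB, Nat.factorization_mul hB0 (by positivity), Nat.factorization_pow]
      simp [mul_comm]
    -- Legendre sums with a common bound
    set b := (m + 1) * n + m + n + 1 with hb
    have hlog : ∀ x : ℕ, x ≤ (m + 1) * n + m + n → Nat.log p x < b := fun x hx =>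
      lt_of_le_of_lt (le_trans (Nat.log_le_self p x) hx) (by omega)
    have L1 : ((m + n)!).factorization p = ∑ i ∈ Finset.Ico 1 b, (m + n) / p ^ i :=
      gen_catalan_legendre hp (hlog _ (by nlinarith))
    have L2 : ((m !)).factorization p = ∑ i ∈ Finset.Ico 1 b, m / p ^ i := by
      simpa using gen_catalan_legendre hp (n := m) (hlog _ (by nlinarith))
    have L3 : ((n !)).factorization p = ∑ i ∈ Finset.Ico 1 b, n / p ^ i :=
      gen_catalan_legendre hp (hlog _ (by nlinarith))
    have L4 : (((m + 1) * n)!).factorization p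
        = ∑ i ∈ Finset.Ico 1 b, (m + 1) * n / p ^ i :=
      gen_catalan_legendre hp (hlog _ (by nlinarith))
    -- the key inequality between Legendre sums
    have key : ((m + n)!).factorization p + m * (n !).factorization p
        ≤ (((m + 1) * n)!).factorization p + (m !).factorization p := by
      rw [L1, L2, L3, L4, Finset.mul_sum, ← Finset.sum_add_distrib,
        ← Finset.sum_add_distrib]
      apply Finset.sum_le_sum
      intro i _
      exact gen_catalan_key m n (p ^ i) (pow_pos hp.pos i)
    rw [add_one_mul] at hfB
    set t := m * (n !).factorization p with ht
    omega
  · simp [Nat.factorization_eq_zero_of_not_prime _ hp]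
end

section
/- For every prime p, every i ≥ 1, and all natural numbers n, m with m ≥ 1, the quantity ⌊(m+1)n/p^i⌋ − (m+1)⌊n/p^i⌋ − ⌊(m+n)/p^i⌋ + ⌊n/p^i⌋ + ⌊m/p^i⌋ is nonnegative. -/
lemma nat_div_ineq (q n m : ℕ) (hq : 0 < q) (hm : 1 ≤ m) :
    0 ≤ (((m + 1) * n / q : ℕ) : ℤ)
        - (m + 1 : ℤ) * ((n / q : ℕ) : ℤ)
        - (((m + n) / q : ℕ) : ℤ)
        + ((n / q : ℕ) : ℤ)
        + ((m / q : ℕ) : ℤ) := by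
  obtain ⟨a, r, hr, rfl⟩ : ∃ a r, r < q ∧ n = q * a + r :=
    ⟨n / q, n % q, Nat.mod_lt _ hq, (Nat.div_add_mod n q).symm ▸ (Nat.div_add_mod n q).symm⟩
  obtain ⟨b, s, hs, rfl⟩ : ∃ b s, s < q ∧ m = q * b + s :=
    ⟨m / q, m % q, Nat.mod_lt _ hq, (Nat.div_add_mod m q).symm⟩
  have hrq : r / q = 0 := Nat.div_eq_of_lt hr
  have hsq : s / q = 0 := Nat.div_eq_of_lt hs
  have key : (s + r) / q ≤ ((q * b + s) + 1) * r / q := by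
    rcases Nat.eq_zero_or_pos r with h | h
    · subst h; simp [hsq]
    · apply Nat.div_le_div_right; nlinarith
  have e1 : ((q * b + s) + 1) * (q * a + r) / q
      = ((q * b + s) + 1) * a + ((q * b + s) + 1) * r / q := by
    rw [Nat.mul_add]
    rw [show ((q * b + s) + 1) * (q * a) = q * (((q * b + s) + 1) * a) by ring]
    rw [Nat.add_comm, Nat.add_mul_div_left _ _ hq, Nat.add_comm]
  have e2 : (q * a + r) / q = a + r / q := by
    rw [Nat.add_comm, Nat.add_mul_div_left _ _ hq, Nat.add_comm]
  have e3 : ((q * b + s) + (q * a + r)) / q = b + a + (s + r) / q := by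
    rw [show (q * b + s) + (q * a + r) = q * (b + a) + (s + r) by ring,
      Nat.add_comm, Nat.add_mul_div_left _ _ hq, Nat.add_comm]
  have e4 : (q * b + s) / q = b + s / q := by
    rw [Nat.add_comm, Nat.add_mul_div_left _ _ hq, Nat.add_comm]
  rw [e1, e2, e3, e4, hrq, hsq]
  obtain ⟨A, hA⟩ : ∃ A, ((q * b + s) + 1) * r / q = A := ⟨_, rfl⟩
  obtain ⟨B, hB⟩ : ∃ B, (s + r) / q = B := ⟨_, rfl⟩
  rw [hA, hB]
  rw [hA, hB] at key
  have key' : (B : ℤ) ≤ (A : ℤ) := by exact_mod_cast key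
  push_cast
  linarith

/-- For every prime `p`, every `i ≥ 1` and all `n, m` with `m ≥ 1`, the summand
`⌊(m+1)n/p^i⌋ − (m+1)⌊n/p^i⌋ − ⌊(m+n)/p^i⌋ + ⌊n/p^i⌋ + ⌊m/p^i⌋` is nonnegative. -/
theorem legendre_summand_nonneg (p : ℕ) (hp : p.Prime) (i : ℕ) (hi : 1 ≤ i)
    (n m : ℕ) (hm : 1 ≤ m) :
    0 ≤ ⌊(((m + 1) * n : ℕ) : ℚ) / (p : ℚ) ^ i⌋
        - (m + 1 : ℤ) * ⌊((n : ℚ)) / (p : ℚ) ^ i⌋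
        - ⌊(((m + n : ℕ)) : ℚ) / (p : ℚ) ^ i⌋
        + ⌊((n : ℚ)) / (p : ℚ) ^ i⌋
        + ⌊((m : ℚ)) / (p : ℚ) ^ i⌋ := by
  have hq : 0 < p ^ i := Nat.pow_pos hp.pos
  have hcast : ((p : ℚ)) ^ i = ((p ^ i : ℕ) : ℚ) := by push_cast; ring
  rw [hcast, Rat.floor_natCast_div_natCast, Rat.floor_natCast_div_natCast,
    Rat.floor_natCast_div_natCast, Rat.floor_natCast_div_natCast]
  exact nat_div_ineq (p ^ i) n m hq hm
end

section
/- The generating function B(x,1) of rooted planar maps by edges satisfies B(x,1) = Σ_{e≥0} (2·3^e / ((e+1)(e+2))) · binom(2e, e) · x^e = −(1/(54x²))·(1 − 18x − (1−12x)^{3/2}) as formal power series. -/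
open PowerSeries

private lemma bb_rec (m : ℕ) :
    ((m : ℚ) + 3) * ((2 * 3 ^ (m+1) * (2 * (m+1)).choose (m+1) : ℚ) / (((m:ℚ) + 1 + 1) * ((m:ℚ) + 1 + 2)))
      = (6 * (2 * (m:ℚ) + 1)) * ((2 * 3 ^ m * (2 * m).choose m : ℚ) / (((m:ℚ) + 1) * ((m:ℚ) + 2))) := by
  have h := Nat.succ_mul_centralBinom_succ m
  have hq : ((m:ℚ) + 1) * ((2 * (m+1)).choose (m+1) : ℚ)
      = 2 * (2 * m + 1) * ((2 * m).choose m : ℚ) := by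
    have h1 : (2 * (m+1)).choose (m+1) = (m+1).centralBinom := rfl
    have h2 : (2 * m).choose m = m.centralBinom := rfl
    rw [h1, h2]; exact_mod_cast h
  have hm1 : ((m:ℚ) + 1) ≠ 0 := by positivity
  have hm2 : ((m:ℚ) + 2) ≠ 0 := by positivity
  have hm3 : ((m:ℚ) + 3) ≠ 0 := by positivity
  field_simp
  linear_combination (3 * 3 ^ m * ((m:ℚ) + 2) * ((m:ℚ) + 3)) * hq

/-- The generating function `B(x,1)` of rooted planar maps by edges, whose coefficient of
`x^e` is `2·3^e·binom(2e,e)/((e+1)(e+2))` (Tutte's formula), satisfies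
`B(x,1) = −(1/(54x²))·(1 − 18x − (1−12x)^{3/2})` as a formal power series identity;
here `(1−12x)^{3/2}` means `(1−12x)·S` for the formal square root `S` of `1−12x`
with constant term `1`, and the identity is written multiplied through by `54x²`. -/
theorem map_generating_function_closed_form
    (S : PowerSeries ℚ) (hS0 : PowerSeries.constantCoeff S = 1)
    (hS : S ^ 2 = 1 - 12 * PowerSeries.X) :
    54 * PowerSeries.X ^ 2 *
        (PowerSeries.mk fun e : ℕ =>
          (2 * 3 ^ e * (2 * e).choose e : ℚ) / ((e + 1) * (e + 2))) =
      -(1 - 18 * PowerSeries.X - (1 - 12 * PowerSeries.X) * S) := by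
  set B : ℚ⟦X⟧ := PowerSeries.mk fun e : ℕ =>
      (2 * 3 ^ e * (2 * e).choose e : ℚ) / ((e + 1) * (e + 2)) with hB
  set T : ℚ⟦X⟧ := 1 - 18 * X + 54 * X ^ 2 * B with hT
  set U : ℚ⟦X⟧ := (1 - 12 * X) * S with hU
  have hconst : d⁄dX ℚ (1 - 12 * X) = -12 := by
    have h12 : (12 : ℚ⟦X⟧) = C 12 := (map_ofNat (C) 12).symm
    rw [map_sub, h12, Derivation.leibniz]
    simp [smul_eq_mul]
  have hSS' : S * d⁄dX ℚ S = -6 := by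
    have h1 : d⁄dX ℚ (S * S) = d⁄dX ℚ (1 - 12 * X) := by
      rw [← sq, hS]
    rw [Derivation.leibniz, hconst, smul_eq_mul] at h1
    have h2 : (2 : ℚ⟦X⟧) * (S * d⁄dX ℚ S) = 2 * (-6) := by
      linear_combination h1
    have h2ne : (2 : ℚ⟦X⟧) ≠ 0 := by
      intro h
      have := congrArg (constantCoeff) h
      rw [map_ofNat] at this; norm_num at this
    exact mul_left_cancel₀ h2ne h2
  have hA : (1 - 12 * X) * d⁄dX ℚ S = -6 * S := by
    linear_combination (-(d⁄dX ℚ S)) * hS + S * hSS'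
  have hdU : d⁄dX ℚ U = (1 - 12 * X) * d⁄dX ℚ S + S * (-12) := by
    rw [hU, Derivation.leibniz, hconst, smul_eq_mul, smul_eq_mul]
  have hODE : d⁄dX ℚ U + 18 * U = 12 * (X * d⁄dX ℚ U) := by
    have h3 : (1 - 12 * X) * d⁄dX ℚ U = -18 * U := by
      rw [hdU, hU]
      linear_combination (1 - 12 * X) * hA
    linear_combination h3
  have hrecU : ∀ n : ℕ, ((n : ℚ) + 1) * coeff (n + 1) U = (12 * n - 18) * coeff n U := by
    intro n
    have hc := congrArg (coeff n) hODE
    rw [map_add, coeff_derivative] at hc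
    have h18 : coeff n (18 * U) = 18 * coeff n U := by
      rw [show (18 : ℚ⟦X⟧) * U = C 18 * U from by rw [map_ofNat], coeff_C_mul]
    have h12' : coeff n (12 * (X * d⁄dX ℚ U)) = 12 * coeff n (X * d⁄dX ℚ U) := by
      rw [show (12 : ℚ⟦X⟧) * (X * d⁄dX ℚ U) = C 12 * (X * d⁄dX ℚ U) from by rw [map_ofNat],
        coeff_C_mul]
    rw [h18, h12'] at hc
    cases n with
    | zero =>
        rw [coeff_zero_X_mul] at hc
        norm_num at hc ⊢
        linear_combination hc
    | succ m =>
        rw [coeff_succ_X_mul, coeff_derivative] at hc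
        push_cast at hc ⊢
        linear_combination hc
  have ht0 : coeff 0 T = 1 := by
    simp [hT, hB, coeff_zero_eq_constantCoeff, map_add, map_sub, map_mul]
  have hc1 : coeff 1 (54 * X ^ 2 * B) = 0 := by
    rw [show (54 : ℚ⟦X⟧) * X ^ 2 * B = C 54 * (X ^ 2 * B) from by rw [map_ofNat]; ring,
      coeff_C_mul, coeff_X_pow_mul']
    norm_num
  have ht1 : coeff 1 T = -18 := by
    rw [hT, map_add, map_sub, hc1]
    have h2 : coeff 1 (18 * X : ℚ⟦X⟧) = 18 := by
      rw [show (18 : ℚ⟦X⟧) * X = C 18 * X from by rw [map_ofNat], coeff_C_mul, coeff_X]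
      norm_num
    rw [h2]
    simp
  have htn : ∀ n : ℕ, coeff (n + 2) T
      = 54 * ((2 * 3 ^ n * (2 * n).choose n : ℚ) / (((n:ℚ) + 1) * ((n:ℚ) + 2))) := by
    intro n
    have hx : coeff (n + 2) (54 * X ^ 2 * B) = 54 * coeff n B := by
      rw [show (54 : ℚ⟦X⟧) * X ^ 2 * B = C 54 * (X ^ 2 * B) from by rw [map_ofNat]; ring,
        coeff_C_mul, coeff_X_pow_mul]
    rw [hT, map_add, map_sub, hx]
    have h1 : coeff (n + 2) (1 : ℚ⟦X⟧) = 0 := by simp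
    have h2 : coeff (n + 2) (18 * X : ℚ⟦X⟧) = 0 := by
      rw [show (18 : ℚ⟦X⟧) * X = C 18 * X from by rw [map_ofNat], coeff_C_mul, coeff_X,
        if_neg (by omega)]
      ring
    rw [h1, h2, hB, coeff_mk]
    ring
  have hrecT : ∀ n : ℕ, ((n : ℚ) + 1) * coeff (n + 1) T = (12 * n - 18) * coeff n T := by
    intro n
    match n with
    | 0 => rw [ht0, ht1]; norm_num
    | 1 =>
        rw [ht1, show (1 : ℕ) + 1 = 0 + 2 from rfl, htn 0]
        norm_num
    | (m + 2) =>
        rw [show m + 2 + 1 = (m + 1) + 2 from rfl, htn (m + 1), htn m]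
        have hb := bb_rec m
        push_cast at hb ⊢
        linear_combination 54 * hb
  have hu0 : coeff 0 U = 1 := by
    rw [hU, coeff_zero_eq_constantCoeff, map_mul, map_sub, map_mul, hS0]
    simp
  have key : T = U := by
    ext n
    induction n with
    | zero => rw [ht0, hu0]
    | succ m ih =>
        have h1 := hrecT m
        have h2 := hrecU m
        rw [ih] at h1
        have hne : ((m : ℚ) + 1) ≠ 0 := by positivity
        exact mul_left_cancel₀ hne (h1.trans h2.symm)
  rw [hT, hU] at key
  linear_combination key
end
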